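/- Let O₁ be a periodic orbit of period π₁ of a continuous map T on a compact metric space M, and O₂ a periodic orbit of period π₂ which is an (ε, ρ)-good approximation of O₁, i.e. at least a fraction ρ of the points of O₂ ε-shadow O₁ for π₁ iterates. Then for every 1-Lipschitz function φ : M → ℝ with ‖φ‖_∞ ≤ diam(M), |∫φ dμ_{O₂} − ∫φ dμ_{O₁}| ≤ ε + 2·diam(M)·(1−ρ). -/

import Mathlib

open scoped Classical
open Finset

/-- Shifting the index of a sum of a periodic function over one full period
does not change the sum. -/
lemma sum_shift_periodic {π : ℕ} (g : ℕ → ℝ) (hg : ∀ m, g (m + π) = g m) (j : ℕ) :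
    ∑ k ∈ Finset.range π, g (k + j) = ∑ k ∈ Finset.range π, g k := by
  induction j with
  | zero => simp
  | succ j ih =>
    have h1 : ∑ k ∈ Finset.range π, g (k + (j + 1))
        = ∑ k ∈ Finset.range π, g ((k + 1) + j) := by
      apply Finset.sum_congr rfl; intro k _; ring_nf
    have h2 := Finset.sum_range_succ' (fun k => g (k + j)) π
    have h3 := Finset.sum_range_succ (fun k => g (k + j)) π
    have hπ : g (π + j) = g (0 + j) := by
      rw [add_comm π j, hg j]; simp
    beta_reduce at h2 h3
    rw [h1, ← ih]
    have : (∑ k ∈ Finset.range π, g (k + 1 + j)) + g (0 + j)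
        = (∑ k ∈ Finset.range π, g (k + j)) + g (π + j) := by
      rw [← h2, ← h3]
    rw [hπ] at this
    have := add_right_cancel this
    simpa using this

/-- If a periodic orbit `O₂` is an `(ε,ρ)`-good approximation of a periodic orbit `O₁`,
then for every 1-Lipschitz function `φ` bounded by the diameter, the integrals against the
two orbital measures differ by at most `ε + 2·diam(M)·(1−ρ)`. -/
theorem stmt6 {M : Type*} [MetricSpace M] [CompactSpace M]
    (T : M → M) (hT : Continuous T)
    (x y : M) (π₁ π₂ : ℕ) (hπ₁ : 0 < π₁) (hπ₂ : 0 < π₂)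
    (hx : T^[π₁] x = x) (hy : T^[π₂] y = y)
    (ε ρ : ℝ) (hε : 0 < ε) (hρ : 0 < ρ) (hρ1 : ρ ≤ 1)
    (hgood : ρ * (π₂ : ℝ) ≤
      ((Finset.range π₂).filter fun i => ∃ j < π₁,
        ∀ k < π₁, dist (T^[k] (T^[j] x)) (T^[k] (T^[i] y)) < ε).card)
    (φ : M → ℝ) (hφ : LipschitzWith 1 φ)
    (hφbound : ∀ z, |φ z| ≤ Metric.diam (Set.univ : Set M)) :
    |((1 : ℝ) / π₂) * ∑ i ∈ Finset.range π₂, φ (T^[i] y) -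
        ((1 : ℝ) / π₁) * ∑ i ∈ Finset.range π₁, φ (T^[i] x)| ≤
      ε + 2 * Metric.diam (Set.univ : Set M) * (1 - ρ) := by
  set D := Metric.diam (Set.univ : Set M) with hDdef
  have hD : 0 ≤ D := Metric.diam_nonneg
  set P1 : ℝ := (π₁ : ℝ) with hP1
  set P2 : ℝ := (π₂ : ℝ) with hP2
  have hP1pos : (0:ℝ) < P1 := by rw [hP1]; exact_mod_cast hπ₁
  have hP2pos : (0:ℝ) < P2 := by rw [hP2]; exact_mod_cast hπ₂
  set A : ℝ := ∑ i ∈ Finset.range π₁, φ (T^[i] x) with hA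
  set S : ℝ := ∑ i ∈ Finset.range π₂, φ (T^[i] y) with hS
  -- periodicity of orbit functions
  have hgy : ∀ m, φ (T^[m + π₂] y) = φ (T^[m] y) := by
    intro m; rw [Function.iterate_add_apply, hy]
  have hgx : ∀ m, φ (T^[m + π₁] x) = φ (T^[m] x) := by
    intro m; rw [Function.iterate_add_apply, hx]
  set B : ℕ → ℝ := fun i => ∑ k ∈ Finset.range π₁, φ (T^[k] (T^[i] y)) with hB
  -- sum of B i over i equals π₁ * S
  have hsumB : ∑ i ∈ Finset.range π₂, B i = P1 * S := by
    have : ∀ i ∈ Finset.range π₂, B i = ∑ k ∈ Finset.range π₁, φ (T^[k + i] y) := by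
      intro i _
      apply Finset.sum_congr rfl; intro k _
      rw [Function.iterate_add_apply]
    rw [Finset.sum_congr rfl this, Finset.sum_comm]
    have : ∀ k ∈ Finset.range π₁, (∑ i ∈ Finset.range π₂, φ (T^[k + i] y)) = S := by
      intro k _
      have := sum_shift_periodic (fun m => φ (T^[m] y)) hgy k
      beta_reduce at this
      rw [hS, ← this]
      apply Finset.sum_congr rfl; intro i _; rw [add_comm]
    rw [Finset.sum_congr rfl this, Finset.sum_const, Finset.card_range,
      nsmul_eq_mul]
  -- the good set
  set G := (Finset.range π₂).filter fun i => ∃ j < π₁,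
      ∀ k < π₁, dist (T^[k] (T^[j] x)) (T^[k] (T^[i] y)) < ε with hG
  have hGsub : G ⊆ Finset.range π₂ := Finset.filter_subset _ _
  have hGcard : (G.card : ℝ) ≤ P2 := by
    exact_mod_cast Nat.cast_le.mpr (by
      simpa using Finset.card_le_card hGsub)
  have hbadcard : (((Finset.range π₂) \ G).card : ℝ) ≤ (1 - ρ) * P2 := by
    have hcd : ((Finset.range π₂) \ G).card = π₂ - G.card := by
      rw [Finset.card_sdiff_of_subset hGsub, Finset.card_range]
    have hle : G.card ≤ π₂ := by simpa using Finset.card_le_card hGsub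
    have : (((Finset.range π₂) \ G).card : ℝ) = P2 - G.card := by
      rw [hcd]; push_cast [Nat.cast_sub hle]; rfl
    rw [this]
    nlinarith [hgood]
  -- bound for good i
  have hgoodbound : ∀ i ∈ G, |B i - A| ≤ P1 * ε := by
    intro i hi
    rw [hG, Finset.mem_filter] at hi
    obtain ⟨-, j, hj, hd⟩ := hi
    have hAj : A = ∑ k ∈ Finset.range π₁, φ (T^[k] (T^[j] x)) := by
      have := sum_shift_periodic (fun m => φ (T^[m] x)) hgx j
      beta_reduce at this
      rw [hA, ← this]
      apply Finset.sum_congr rfl; intro k _; rw [Function.iterate_add_apply]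
    rw [hAj, hB]
    simp only
    rw [← Finset.sum_sub_distrib]
    calc |∑ k ∈ Finset.range π₁, (φ (T^[k] (T^[i] y)) - φ (T^[k] (T^[j] x)))|
        ≤ ∑ k ∈ Finset.range π₁, |φ (T^[k] (T^[i] y)) - φ (T^[k] (T^[j] x))| :=
          Finset.abs_sum_le_sum_abs _ _
      _ ≤ ∑ k ∈ Finset.range π₁, ε := by
          apply Finset.sum_le_sum
          intro k hk
          have hlip := hφ.dist_le_mul (T^[k] (T^[i] y)) (T^[k] (T^[j] x))
          rw [Real.dist_eq] at hlip
          have hdk := hd k (Finset.mem_range.mp hk)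
          rw [dist_comm] at hdk
          calc |φ (T^[k] (T^[i] y)) - φ (T^[k] (T^[j] x))|
              ≤ 1 * dist (T^[k] (T^[i] y)) (T^[k] (T^[j] x)) := by
                simpa using hlip
            _ ≤ ε := by rw [one_mul]; exact le_of_lt hdk
      _ = P1 * ε := by rw [Finset.sum_const, Finset.card_range, nsmul_eq_mul]
  -- bound for arbitrary i
  have hanybound : ∀ i, |B i - A| ≤ 2 * P1 * D := by
    intro i
    have hBi : |B i| ≤ P1 * D := by
      calc |B i| ≤ ∑ k ∈ Finset.range π₁, |φ (T^[k] (T^[i] y))| :=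
            Finset.abs_sum_le_sum_abs _ _
        _ ≤ ∑ k ∈ Finset.range π₁, D := Finset.sum_le_sum fun k _ => hφbound _
        _ = P1 * D := by rw [Finset.sum_const, Finset.card_range, nsmul_eq_mul]
    have hAb : |A| ≤ P1 * D := by
      calc |A| ≤ ∑ k ∈ Finset.range π₁, |φ (T^[k] x)| :=
            Finset.abs_sum_le_sum_abs _ _
        _ ≤ ∑ k ∈ Finset.range π₁, D := Finset.sum_le_sum fun k _ => hφbound _
        _ = P1 * D := by rw [Finset.sum_const, Finset.card_range, nsmul_eq_mul]
    calc |B i - A| ≤ |B i| + |A| := abs_sub _ _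
      _ ≤ 2 * P1 * D := by linarith
  -- total bound on the sum
  have htotal : |∑ i ∈ Finset.range π₂, (B i - A)| ≤
      (ε + 2 * D * (1 - ρ)) * (P1 * P2) := by
    have h1 : ∑ i ∈ G, |B i - A| ≤ (G.card : ℝ) * (P1 * ε) := by
      calc ∑ i ∈ G, |B i - A| ≤ ∑ i ∈ G, P1 * ε := Finset.sum_le_sum hgoodbound
        _ = (G.card : ℝ) * (P1 * ε) := by rw [Finset.sum_const, nsmul_eq_mul]
    have h2 : ∑ i ∈ (Finset.range π₂) \ G, |B i - A|
        ≤ (((Finset.range π₂) \ G).card : ℝ) * (2 * P1 * D) := by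
      calc ∑ i ∈ (Finset.range π₂) \ G, |B i - A|
          ≤ ∑ i ∈ (Finset.range π₂) \ G, 2 * P1 * D :=
            Finset.sum_le_sum fun i _ => hanybound i
        _ = _ := by rw [Finset.sum_const, nsmul_eq_mul]
    have hb1 : (G.card : ℝ) * (P1 * ε) ≤ P2 * (P1 * ε) :=
      mul_le_mul_of_nonneg_right hGcard (by positivity)
    have hb2 : (((Finset.range π₂) \ G).card : ℝ) * (2 * P1 * D)
        ≤ ((1 - ρ) * P2) * (2 * P1 * D) :=
      mul_le_mul_of_nonneg_right hbadcard (by positivity)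
    calc |∑ i ∈ Finset.range π₂, (B i - A)|
        ≤ ∑ i ∈ Finset.range π₂, |B i - A| := Finset.abs_sum_le_sum_abs _ _
      _ = ∑ i ∈ (Finset.range π₂) \ G, |B i - A| + ∑ i ∈ G, |B i - A| :=
          (Finset.sum_sdiff hGsub).symm
      _ ≤ ((1 - ρ) * P2) * (2 * P1 * D) + P2 * (P1 * ε) := by linarith
      _ = (ε + 2 * D * (1 - ρ)) * (P1 * P2) := by ring
  -- rewrite the goal
  have hkey : (1 / P2) * S - (1 / P1) * A
      = (∑ i ∈ Finset.range π₂, (B i - A)) / (P1 * P2) := by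
    rw [Finset.sum_sub_distrib, hsumB, Finset.sum_const, Finset.card_range,
      nsmul_eq_mul]
    field_simp
    ring
  rw [hkey, abs_div, abs_of_pos (by positivity : (0:ℝ) < P1 * P2),
    div_le_iff₀ (by positivity)]
  exact htotal
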